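/- arXiv:1501.01259 — 3 statements merged into one kernel-verified Lean document; each statement's English description precedes it below -/
import Mathlib

section
/- Let X be a cell complex such that every 1-cell is adjacent to only finitely many 2-cells, and suppose FV_{X,ℤ}(k) < ∞ for every integer k. Then the 1-skeleton of X is a fine graph: for every edge e and every L > 0, there are only finitely many circuits of length at most L containing e. -/
open Finsupp

/-- A (combinatorial, oriented) graph: the 1-skeleton data of a complex. -/
structure CGraph where
  V : Type
  E : Type
  ends : E → V × V

/-- ℓ¹-norm of an integral chain. -/
def l1Z {α : Type} (c : α →₀ ℤ) : ℕ := c.sum fun _ v => v.natAbs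

/-- Two chains are disjoint if no basis element has nonzero coefficient in both. -/
def DisjointChains {α : Type} (a b : α →₀ ℤ) : Prop := ∀ x, a x = 0 ∨ b x = 0

namespace CGraph

variable (Γ : CGraph)

/-- Source vertex of a directed edge (an edge with an orientation bit). -/
def src (p : Γ.E × Bool) : Γ.V := if p.2 then (Γ.ends p.1).1 else (Γ.ends p.1).2

/-- Target vertex of a directed edge. -/
def tgt (p : Γ.E × Bool) : Γ.V := if p.2 then (Γ.ends p.1).2 else (Γ.ends p.1).1

/-- A nonempty cyclically-consecutive list of directed edges. -/
def IsClosedPath (l : List (Γ.E × Bool)) : Prop :=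
  l ≠ [] ∧ ∀ i : Fin l.length,
    Γ.tgt (l.get i) = Γ.src (l.get ⟨(↑i + 1) % l.length, Nat.mod_lt _ i.pos⟩)

/-- A circuit: a simple closed combinatorial path (no repeated edges or vertices). -/
def IsCircuit (l : List (Γ.E × Bool)) : Prop :=
  Γ.IsClosedPath l ∧ (l.map Prod.fst).Nodup ∧ (l.map Γ.src).Nodup

/-- The 1-cycle induced by a closed path: coefficient ±1 on each traversed edge. -/
noncomputable def pathCycle (l : List (Γ.E × Bool)) : Γ.E →₀ ℤ :=
  (l.map fun p => Finsupp.single p.1 (if p.2 then (1 : ℤ) else -1)).sum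

/-- The simplicial boundary map `C₁ → C₀`. -/
noncomputable def d1 (γ : Γ.E →₀ ℤ) : Γ.V →₀ ℤ :=
  γ.sum fun e c => c • (Finsupp.single (Γ.ends e).2 (1 : ℤ) - Finsupp.single (Γ.ends e).1 1)

/-- A 1-chain is a cycle if its boundary vanishes. -/
def IsCycle (γ : Γ.E →₀ ℤ) : Prop := Γ.d1 γ = 0

/-- A graph is fine if each edge lies in only finitely many circuits of each bounded length. -/
def Fine : Prop :=
  ∀ (e : Γ.E) (L : ℕ),
    {l : List (Γ.E × Bool) | Γ.IsCircuit l ∧ e ∈ l.map Prod.fst ∧ l.length ≤ L}.Finite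

/-- Walks from `u` to `v`. -/
def IsWalk : List (Γ.E × Bool) → Γ.V → Γ.V → Prop
  | [], u, v => u = v
  | p :: l, u, v => Γ.src p = u ∧ IsWalk l (Γ.tgt p) v

/-- Combinatorial distance in a graph (∞ if there is no walk). -/
noncomputable def gdist (u v : Γ.V) : ℕ∞ :=
  ⨅ l ∈ {l : List (Γ.E × Bool) | Γ.IsWalk l u v}, (l.length : ℕ∞)

def Connected : Prop := ∀ u v : Γ.V, Γ.gdist u v < ⊤

/-- Gromov hyperbolicity via the four-point condition. -/
def Hyperbolic : Prop :=
  ∃ δ : ℕ, ∀ x y z w : Γ.V,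
    Γ.gdist x y + Γ.gdist z w ≤
      max (Γ.gdist x z + Γ.gdist y w) (Γ.gdist x w + Γ.gdist y z) + (δ : ℕ∞)

end CGraph

/-- A combinatorial 2-complex: a graph together with a set of 2-cells, each with a
boundary 1-chain. -/
structure TwoComplex extends CGraph where
  F : Type
  fb : F → E →₀ ℤ

namespace TwoComplex

variable (X : TwoComplex)

/-- The boundary map `C₂ → C₁` over ℤ. -/
noncomputable def d2 (μ : X.F →₀ ℤ) : X.E →₀ ℤ := μ.sum fun f c => c • X.fb f

/-- The filling norm `‖γ‖_∂` over ℤ (∞ if `γ` bounds no 2-chain). -/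
noncomputable def fillNorm (γ : X.E →₀ ℤ) : ℕ∞ :=
  ⨅ μ ∈ {μ : X.F →₀ ℤ | X.d2 μ = γ}, (l1Z μ : ℕ∞)

/-- The homological Dehn function of `X` over ℤ. -/
noncomputable def FV (k : ℕ) : ℕ∞ :=
  ⨆ γ ∈ {γ : X.E →₀ ℤ | X.toCGraph.IsCycle γ ∧ l1Z γ ≤ k}, X.fillNorm γ

end TwoComplex

-- ### Auxiliary development

noncomputable def d1lm (Γ : CGraph) : (Γ.E →₀ ℤ) →ₗ[ℤ] (Γ.V →₀ ℤ) :=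
  Finsupp.lsum ℤ fun e => LinearMap.toSpanSingleton ℤ _
    (Finsupp.single (Γ.ends e).2 (1:ℤ) - Finsupp.single (Γ.ends e).1 1)

lemma d1_eq_lm (Γ : CGraph) (γ : Γ.E →₀ ℤ) : Γ.d1 γ = d1lm Γ γ := by
  rw [CGraph.d1, d1lm, Finsupp.lsum_apply]
  exact Finsupp.sum_congr fun e _ => (LinearMap.toSpanSingleton_apply ℤ _ _ _).symm

lemma pathCycle_cons (Γ : CGraph) (p) (t : List (Γ.E × Bool)) :
    Γ.pathCycle (p :: t) = Finsupp.single p.1 (if p.2 then (1:ℤ) else -1) + Γ.pathCycle t := by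
  simp [CGraph.pathCycle]

lemma pathCycle_apply_not_mem (Γ : CGraph) (l : List (Γ.E × Bool)) (e : Γ.E)
    (h : e ∉ l.map Prod.fst) : Γ.pathCycle l e = 0 := by
  classical
  induction l with
  | nil => simp [CGraph.pathCycle]
  | cons p t ih =>
    simp only [List.map_cons, List.mem_cons, not_or] at h
    rw [pathCycle_cons, Finsupp.add_apply, ih h.2, Finsupp.single_apply,
      if_neg (fun hh => h.1 hh.symm)]
    simp

lemma pathCycle_apply_mem (Γ : CGraph) {l : List (Γ.E × Bool)}
    (hnd : (l.map Prod.fst).Nodup) {p} (hp : p ∈ l) :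
    Γ.pathCycle l p.1 = if p.2 then (1:ℤ) else -1 := by
  classical
  induction l with
  | nil => cases hp
  | cons q t ih =>
    simp only [List.map_cons, List.nodup_cons] at hnd
    rw [pathCycle_cons, Finsupp.add_apply]
    rcases List.mem_cons.mp hp with h | h
    · subst h
      rw [pathCycle_apply_not_mem _ _ _ hnd.1, Finsupp.single_apply, if_pos rfl, add_zero]
    · have hne : q.1 ≠ p.1 := fun hq => hnd.1 (hq ▸ List.mem_map_of_mem (f := Prod.fst) h)
      rw [Finsupp.single_apply, if_neg hne, zero_add, ih hnd.2 h]

lemma l1Z_add_le {α : Type} (a b : α →₀ ℤ) : l1Z (a + b) ≤ l1Z a + l1Z b := by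
  classical
  have h1 : l1Z (a + b) = ∑ x ∈ a.support ∪ b.support, ((a + b) x).natAbs := by
    rw [l1Z, Finsupp.sum]
    exact Finset.sum_subset Finsupp.support_add
      (fun x _ hx => by simp [Finsupp.notMem_support_iff.mp hx])
  have h2 : l1Z a = ∑ x ∈ a.support ∪ b.support, (a x).natAbs := by
    rw [l1Z, Finsupp.sum]
    exact Finset.sum_subset Finset.subset_union_left
      (fun x _ hx => by simp [Finsupp.notMem_support_iff.mp hx])
  have h3 : l1Z b = ∑ x ∈ a.support ∪ b.support, (b x).natAbs := by
    rw [l1Z, Finsupp.sum]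
    exact Finset.sum_subset Finset.subset_union_right
      (fun x _ hx => by simp [Finsupp.notMem_support_iff.mp hx])
  rw [h1, h2, h3, ← Finset.sum_add_distrib]
  exact Finset.sum_le_sum fun x _ => by rw [Finsupp.add_apply]; exact Int.natAbs_add_le _ _

lemma l1Z_single {α : Type} (x : α) (c : ℤ) : l1Z (Finsupp.single x c) = c.natAbs := by
  classical
  by_cases h : c = 0
  · simp [h, l1Z]
  · rw [l1Z, Finsupp.sum_single_index]; simp

lemma l1Z_pathCycle_le (Γ : CGraph) (l : List (Γ.E × Bool)) : l1Z (Γ.pathCycle l) ≤ l.length := by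
  induction l with
  | nil => simp [CGraph.pathCycle, l1Z]
  | cons p t ih =>
    rw [pathCycle_cons]
    refine le_trans (l1Z_add_le _ _) ?_
    have h : l1Z (Finsupp.single p.1 (if p.2 then (1:ℤ) else -1)) ≤ 1 := by
      rw [l1Z_single]; cases hb : p.2 <;> simp
    simp only [List.length_cons]
    omega

lemma support_card_le_l1Z {α : Type} (c : α →₀ ℤ) : c.support.card ≤ l1Z c := by
  rw [l1Z, Finsupp.sum, Finset.card_eq_sum_ones]
  exact Finset.sum_le_sum fun x hx =>
    Int.natAbs_pos.mpr (Finsupp.mem_support_iff.mp hx)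

lemma list_sum_map_get {α : Type} {M : Type*} [AddCommMonoid M] (l : List α) (f : α → M) :
    (l.map f).sum = ∑ i : Fin l.length, f (l.get i) := by
  induction l with
  | nil => simp
  | cons a t ih =>
    rw [List.map_cons, List.sum_cons, ih]
    show f a + ∑ i : Fin t.length, f (t.get i) = ∑ i : Fin (t.length + 1), f ((a :: t).get i)
    rw [Fin.sum_univ_succ]
    rfl

lemma fin_succ_mod {m : ℕ} (i : Fin (m+1)) (h : ((i:ℕ)+1) % (m+1) < m+1) :
    (⟨((i:ℕ)+1) % (m+1), h⟩ : Fin (m+1)) = i + 1 := by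
  apply Fin.ext
  rw [Fin.add_def, Fin.val_one']
  show ((i:ℕ) + 1) % (m + 1) = ((i:ℕ) + 1 % (m + 1)) % (m + 1)
  rw [Nat.add_mod_mod]

lemma rotate_sum {n : ℕ} (hn : 0 < n) {M : Type*} [AddCommMonoid M] (g : Fin n → M) :
    (∑ i : Fin n, g ⟨((i:ℕ)+1) % n, Nat.mod_lt _ hn⟩) = ∑ i : Fin n, g i := by
  obtain ⟨m, rfl⟩ : ∃ m, n = m + 1 := ⟨n - 1, by omega⟩
  have h : ∀ i : Fin (m+1), (⟨((i:ℕ)+1) % (m+1), Nat.mod_lt _ hn⟩ : Fin (m+1))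
      = finRotate (m+1) i := by
    intro i; rw [finRotate_succ_apply]; exact fin_succ_mod i _
  calc (∑ i : Fin (m+1), g ⟨((i:ℕ)+1) % (m+1), Nat.mod_lt _ hn⟩)
      = ∑ i : Fin (m+1), g (finRotate (m+1) i) := by
        exact Finset.sum_congr rfl fun i _ => by rw [h]
    _ = ∑ i : Fin (m+1), g i := Equiv.sum_comp _ g

lemma d1_single (Γ : CGraph) (p : Γ.E × Bool) :
    d1lm Γ (Finsupp.single p.1 (if p.2 then (1:ℤ) else -1))
      = Finsupp.single (Γ.tgt p) 1 - Finsupp.single (Γ.src p) 1 := by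
  rw [d1lm, Finsupp.lsum_single, LinearMap.toSpanSingleton_apply]
  cases hb : p.2 <;> simp [CGraph.tgt, CGraph.src, hb]

lemma d1_pathCycle (Γ : CGraph) (l : List (Γ.E × Bool)) (hl : Γ.IsClosedPath l) :
    Γ.d1 (Γ.pathCycle l) = 0 := by
  have hn : 0 < l.length := List.length_pos_iff.mpr hl.1
  rw [d1_eq_lm, CGraph.pathCycle, map_list_sum, List.map_map, list_sum_map_get]
  have h1 : (∑ i : Fin l.length, ((d1lm Γ) ∘ fun p => Finsupp.single p.1
        (if p.2 then (1:ℤ) else -1)) (l.get i))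
      = ∑ i : Fin l.length,
        (Finsupp.single (Γ.tgt (l.get i)) 1 - Finsupp.single (Γ.src (l.get i)) 1) :=
    Finset.sum_congr rfl fun i _ => d1_single Γ (l.get i)
  rw [h1, Finset.sum_sub_distrib]
  have h2 : (∑ i : Fin l.length, Finsupp.single (Γ.tgt (l.get i)) (1:ℤ))
      = ∑ i : Fin l.length, Finsupp.single (Γ.src (l.get i)) (1:ℤ) := by
    calc (∑ i : Fin l.length, Finsupp.single (Γ.tgt (l.get i)) (1:ℤ))
        = ∑ i : Fin l.length,
            Finsupp.single (Γ.src (l.get ⟨((i:ℕ)+1) % l.length, Nat.mod_lt _ hn⟩)) (1:ℤ) :=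
          Finset.sum_congr rfl fun i _ => by rw [hl.2 i]
      _ = ∑ i : Fin l.length, Finsupp.single (Γ.src (l.get i)) (1:ℤ) :=
          rotate_sum hn fun i => Finsupp.single (Γ.src (l.get i)) (1:ℤ)
  rw [h2, sub_self]

lemma circuit_support (Γ : CGraph) {l : List (Γ.E × Bool)} (hc : Γ.IsCircuit l)
    {γ' : Γ.E →₀ ℤ}
    (h1 : ∀ e', γ' e' = 0 ∨ γ' e' = Γ.pathCycle l e')
    (h2 : Γ.d1 γ' = 0) {e : Γ.E} (he : e ∈ l.map Prod.fst) (hne : γ' e ≠ 0) :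
    ∀ p ∈ l, γ' p.1 ≠ 0 := by
  classical
  obtain ⟨⟨hnil, hstep0⟩, hndE, hndV⟩ := hc
  have hn : 0 < l.length := List.length_pos_iff.mpr hnil
  set idx : ℕ → Fin l.length := fun k => ⟨k % l.length, Nat.mod_lt _ hn⟩ with hidxdef
  have idx_small : ∀ i : Fin l.length, idx i.val = i :=
    fun i => Fin.ext (Nat.mod_eq_of_lt i.isLt)
  have hstep : ∀ k : ℕ, Γ.tgt (l.get (idx k)) = Γ.src (l.get (idx (k+1))) := by
    intro k
    have h := hstep0 (idx k)
    have heq : (⟨((idx k : ℕ) + 1) % l.length, Nat.mod_lt _ (idx k).pos⟩ : Fin l.length)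
        = idx (k+1) := by
      apply Fin.ext
      show ((k % l.length) + 1) % l.length = (k + 1) % l.length
      rw [Nat.mod_add_mod]
    rwa [heq] at h
  have hget_inj : ∀ {β : Type} (f : Γ.E × Bool → β), (l.map f).Nodup →
      ∀ j k : Fin l.length, f (l.get j) = f (l.get k) → j = k := by
    intro β f hf j k h
    have hj : (j : ℕ) < (l.map f).length := by simpa using j.isLt
    have hk : (k : ℕ) < (l.map f).length := by simpa using k.isLt
    have h' : (l.map f).get ⟨j, hj⟩ = (l.map f).get ⟨k, hk⟩ := by
      simp only [List.get_eq_getElem, List.getElem_map]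
      simpa using h
    have h'' := List.nodup_iff_injective_get.mp hf h'
    exact Fin.ext (Fin.mk.inj h'')
  have hEinj : ∀ j k : Fin l.length, (l.get j).1 = (l.get k).1 → j = k :=
    hget_inj Prod.fst hndE
  have hVinj : ∀ j k : Fin l.length, Γ.src (l.get j) = Γ.src (l.get k) → j = k :=
    hget_inj Γ.src hndV
  obtain ⟨p₀, hp₀, hp₀e⟩ := List.mem_map.mp he
  obtain ⟨i₀f, hi₀⟩ := List.mem_iff_get.mp hp₀
  intro p hp
  obtain ⟨jf, hjf⟩ := List.mem_iff_get.mp hp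
  by_contra hns
  have hns' : γ' p.1 = 0 := hns
  have hex : ∃ k : ℕ, γ' ((l.get (idx (i₀f.val + k + 1))).1) = 0 := by
    refine ⟨jf.val + l.length - (i₀f.val + 1), ?_⟩
    have hlt := i₀f.isLt
    have harith : i₀f.val + (jf.val + l.length - (i₀f.val + 1)) + 1 = jf.val + l.length := by
      omega
    rw [harith]
    have hidz : idx (jf.val + l.length) = jf := by
      apply Fin.ext
      show (jf.val + l.length) % l.length = jf.val
      rw [Nat.add_mod_right]
      exact Nat.mod_eq_of_lt jf.isLt
    rw [hidz, hjf]
    exact hns'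
  set k₀ := Nat.find hex with hk₀def
  have hk₀ : γ' ((l.get (idx (i₀f.val + k₀ + 1))).1) = 0 := Nat.find_spec hex
  have hSa : γ' ((l.get (idx (i₀f.val + k₀))).1) ≠ 0 := by
    by_cases hz : k₀ = 0
    · rw [hz, Nat.add_zero, idx_small, hi₀, hp₀e]
      exact hne
    · obtain ⟨m, hm⟩ : ∃ m, k₀ = m + 1 := ⟨k₀ - 1, by omega⟩
      have hmin := Nat.find_min hex (show m < k₀ by omega)
      rw [hm, ← Nat.add_assoc]
      exact hmin
  set a := i₀f.val + k₀ with hadef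
  have hSa1 : γ' ((l.get (idx (a+1))).1) = 0 := hk₀
  set v := Γ.src (l.get (idx (a+1))) with hv
  have hF1 : Γ.tgt (l.get (idx a)) = v := hstep a
  have hidxne : idx a ≠ idx (a+1) := by
    intro hcontra
    rw [hcontra] at hSa
    exact hSa hSa1
  have hsrcne_a : Γ.src (l.get (idx a)) ≠ v :=
    fun hcontra => hidxne (hVinj _ _ hcontra)
  have htgt_eq : ∀ c : ℕ, Γ.tgt (l.get (idx c)) = v → idx c = idx a := by
    intro c hcv
    have hsucc : idx (c+1) = idx (a+1) := hVinj _ _ (by rw [← hstep c, hcv])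
    have hmc : (c + 1) % l.length = (a + 1) % l.length := congrArg Fin.val hsucc
    exact Fin.ext (Nat.ModEq.add_right_cancel' 1 hmc)
  have hsrc_eq : ∀ c : ℕ, Γ.src (l.get (idx c)) = v → idx c = idx (a+1) :=
    fun c hcv => hVinj _ _ hcv
  have hd1v : (Γ.d1 γ') v = 0 := by rw [h2]; rfl
  have hexp : (Γ.d1 γ') v = ∑ e'' ∈ γ'.support,
      γ' e'' * ((if (Γ.ends e'').2 = v then (1:ℤ) else 0)
        - (if (Γ.ends e'').1 = v then 1 else 0)) := by
    rw [CGraph.d1, Finsupp.sum_apply, Finsupp.sum]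
    refine Finset.sum_congr rfl fun e'' _ => ?_
    rw [Finsupp.smul_apply, Finsupp.sub_apply, Finsupp.single_apply, Finsupp.single_apply,
      smul_eq_mul]
  have hterm : ∀ b ∈ γ'.support, b ≠ (l.get (idx a)).1 →
      γ' b * ((if (Γ.ends b).2 = v then (1:ℤ) else 0)
        - (if (Γ.ends b).1 = v then 1 else 0)) = 0 := by
    intro b hb hbne
    have hb0 : γ' b ≠ 0 := Finsupp.mem_support_iff.mp hb
    have hbpc : Γ.pathCycle l b ≠ 0 := by
      rcases h1 b with h | h
      · exact absurd h hb0
      · rw [← h]; exact hb0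
    have hbmem : b ∈ l.map Prod.fst := by
      by_contra hcon; exact hbpc (pathCycle_apply_not_mem _ _ _ hcon)
    obtain ⟨q, hq, hqb⟩ := List.mem_map.mp hbmem
    obtain ⟨jq, hjq⟩ := List.mem_iff_get.mp hq
    have hbeq : (l.get jq).1 = b := by rw [hjq, hqb]
    have hsrcne : Γ.src (l.get jq) ≠ v := by
      intro hcon
      have hj1 : idx jq.val = idx (a+1) := by
        apply hsrc_eq jq.val
        rw [idx_small]; exact hcon
      rw [idx_small] at hj1
      apply hb0
      rw [← hbeq, hj1]
      exact hSa1
    have htgtne : Γ.tgt (l.get jq) ≠ v := by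
      intro hcon
      have hj1 : idx jq.val = idx a := by
        apply htgt_eq jq.val
        rw [idx_small]; exact hcon
      rw [idx_small] at hj1
      apply hbne
      rw [← hbeq, hj1]
    have h2v : (Γ.ends (l.get jq).1).2 ≠ v ∧ (Γ.ends (l.get jq).1).1 ≠ v := by
      cases hbq : (l.get jq).2 <;>
        simp only [CGraph.src, CGraph.tgt, hbq, if_true, if_false,
          Bool.false_eq_true] at hsrcne htgtne <;>
        exact ⟨by assumption, by assumption⟩
    rw [← hbeq, if_neg h2v.1, if_neg h2v.2]
    ring
  have hmema : (l.get (idx a)).1 ∈ γ'.support := Finsupp.mem_support_iff.mpr hSa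
  have hgp : γ' ((l.get (idx a)).1) = if (l.get (idx a)).2 then (1:ℤ) else -1 := by
    rcases h1 ((l.get (idx a)).1) with h | h
    · exact absurd h hSa
    · rw [h]; exact pathCycle_apply_mem Γ hndE (l.get_mem _)
  have hval : γ' ((l.get (idx a)).1) * ((if (Γ.ends ((l.get (idx a)).1)).2 = v then (1:ℤ) else 0)
      - (if (Γ.ends ((l.get (idx a)).1)).1 = v then 1 else 0)) = 1 := by
    rw [hgp]
    cases hbq : (l.get (idx a)).2 <;>
      simp only [CGraph.src, CGraph.tgt, hbq, if_true, if_false,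
        Bool.false_eq_true] at hF1 hsrcne_a
    · rw [if_neg hsrcne_a, if_pos hF1]
      simp
    · rw [if_pos hF1, if_neg hsrcne_a]
      simp
  have hcontr : (0:ℤ) = 1 := by
    rw [← hd1v, hexp, Finset.sum_eq_single_of_mem _ hmema hterm, hval]
  exact one_ne_zero hcontr.symm

noncomputable def d2lm (X : TwoComplex) : (X.F →₀ ℤ) →ₗ[ℤ] (X.E →₀ ℤ) :=
  Finsupp.lsum ℤ fun f => LinearMap.toSpanSingleton ℤ _ (X.fb f)

lemma d2_eq_lm (X : TwoComplex) (μ : X.F →₀ ℤ) : X.d2 μ = d2lm X μ := by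
  rw [TwoComplex.d2, d2lm, Finsupp.lsum_apply]
  exact Finsupp.sum_congr fun f _ => (LinearMap.toSpanSingleton_apply ℤ _ _ _).symm

lemma d1_d2_eq_zero (X : TwoComplex) (hbd : ∀ f : X.F, X.toCGraph.d1 (X.fb f) = 0)
    (μ : X.F →₀ ℤ) : X.toCGraph.d1 (X.d2 μ) = 0 := by
  rw [d2_eq_lm, d1_eq_lm]
  have h : (d1lm X.toCGraph).comp (d2lm X) = 0 := by
    apply Finsupp.lhom_ext
    intro f c
    have : d2lm X (Finsupp.single f c) = c • X.fb f := by
      rw [d2lm, Finsupp.lsum_single, LinearMap.toSpanSingleton_apply]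
    rw [LinearMap.comp_apply, this, map_smul, ← d1_eq_lm, hbd f, smul_zero]
    rfl
  exact congrArg (fun φ => φ μ) h

lemma d2_apply (X : TwoComplex) (μ : X.F →₀ ℤ) (e : X.E) :
    X.d2 μ e = ∑ f ∈ μ.support, μ f * X.fb f e := by
  rw [TwoComplex.d2, Finsupp.sum_apply, Finsupp.sum]
  exact Finset.sum_congr rfl fun f _ => by rw [Finsupp.smul_apply, smul_eq_mul]

def Aset (X : TwoComplex) (e : X.E) : ℕ → Set X.F
  | 0 => {f | X.fb f e ≠ 0}
  | n+1 => Aset X e n ∪ {f | ∃ g ∈ Aset X e n, ∃ e', X.fb g e' ≠ 0 ∧ X.fb f e' ≠ 0}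

lemma Aset_finite (X : TwoComplex) (hadj : ∀ e : X.E, {f : X.F | X.fb f e ≠ 0}.Finite)
    (e : X.E) : ∀ n, (Aset X e n).Finite
  | 0 => hadj e
  | (n+1) => by
    refine (Aset_finite X hadj e n).union ?_
    have hsub : {f | ∃ g ∈ Aset X e n, ∃ e', X.fb g e' ≠ 0 ∧ X.fb f e' ≠ 0} ⊆
        ⋃ g ∈ Aset X e n, ⋃ e' ∈ ((X.fb g).support : Set X.E), {f | X.fb f e' ≠ 0} := by
      rintro f ⟨g, hg, e', h1, h2⟩
      simp only [Set.mem_iUnion]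
      exact ⟨g, hg, e', Finsupp.mem_support_iff.mpr h1, h2⟩
    exact (((Aset_finite X hadj e n).biUnion fun g _ =>
      ((X.fb g).support.finite_toSet.biUnion fun e' _ => hadj e')).subset hsub)

lemma Aset_mono (X : TwoComplex) (e : X.E) {n m : ℕ} (h : n ≤ m) :
    Aset X e n ⊆ Aset X e m := by
  induction m with
  | zero => rw [Nat.le_zero.mp h]
  | succ k ih =>
    rcases Nat.lt_or_ge n (k+1) with hlt | hge
    · exact (ih (by omega)).trans (Set.subset_union_left)
    · rw [Nat.le_antisymm h hge]

def Cset (X : TwoComplex) (e : X.E) (μ : X.F →₀ ℤ) : ℕ → Set X.F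
  | 0 => {f | μ f ≠ 0 ∧ X.fb f e ≠ 0}
  | n+1 => Cset X e μ n ∪
      {f | μ f ≠ 0 ∧ ∃ g ∈ Cset X e μ n, ∃ e', X.fb g e' ≠ 0 ∧ X.fb f e' ≠ 0}

lemma Cset_subset_supp (X : TwoComplex) (e : X.E) (μ : X.F →₀ ℤ) :
    ∀ n, Cset X e μ n ⊆ {f | μ f ≠ 0}
  | 0 => fun f hf => hf.1
  | (n+1) => by
    rintro f (hf | hf)
    · exact Cset_subset_supp X e μ n hf
    · exact hf.1

lemma Cset_subset_Aset (X : TwoComplex) (e : X.E) (μ : X.F →₀ ℤ) :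
    ∀ n, Cset X e μ n ⊆ Aset X e n
  | 0 => fun f hf => hf.2
  | (n+1) => by
    rintro f (hf | ⟨hf, g, hg, e', h1, h2⟩)
    · exact Set.subset_union_left (Cset_subset_Aset X e μ n hf)
    · exact Set.subset_union_right ⟨g, Cset_subset_Aset X e μ n hg, e', h1, h2⟩

lemma Cset_mono (X : TwoComplex) (e : X.E) (μ : X.F →₀ ℤ) {n m : ℕ} (h : n ≤ m) :
    Cset X e μ n ⊆ Cset X e μ m := by
  induction m with
  | zero => rw [Nat.le_zero.mp h]
  | succ k ih =>
    rcases Nat.lt_or_ge n (k+1) with hlt | hge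
    · exact (ih (by omega)).trans (Set.subset_union_left)
    · rw [Nat.le_antisymm h hge]

lemma Cset_stable_exists (X : TwoComplex) (e : X.E) (μ : X.F →₀ ℤ)
    (hne : (Cset X e μ 0).Nonempty) :
    ∃ n ≤ μ.support.card, Cset X e μ n = Cset X e μ (n+1) := by
  classical
  by_contra h
  push_neg at h
  have hfin : ∀ n, (Cset X e μ n).Finite := fun n =>
    μ.support.finite_toSet.subset (fun f hf =>
      Finsupp.mem_support_iff.mpr (Cset_subset_supp X e μ n hf))
  have hcard : ∀ n, n ≤ μ.support.card + 1 → n + 1 ≤ (Cset X e μ n).ncard := by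
    intro n
    induction n with
    | zero => intro _; exact Nat.one_le_iff_ne_zero.mpr ((Set.ncard_pos (hfin 0)).mpr hne).ne'
    | succ k ih =>
      intro hk
      have h1 : Cset X e μ k ⊂ Cset X e μ (k+1) :=
        ssubset_of_subset_of_ne Set.subset_union_left (h k (by omega))
      have h2 := Set.ncard_lt_ncard h1 (hfin (k+1))
      have h3 := ih (by omega)
      omega
  have hle : (Cset X e μ (μ.support.card + 1)).ncard ≤ μ.support.card := by
    have hsub : Cset X e μ (μ.support.card + 1) ⊆ ↑μ.support := fun f hf =>
      Finsupp.mem_support_iff.mpr (Cset_subset_supp X e μ _ hf)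
    calc (Cset X e μ (μ.support.card + 1)).ncard
        ≤ (↑μ.support : Set X.F).ncard := Set.ncard_le_ncard hsub μ.support.finite_toSet
      _ = μ.support.card := Set.ncard_coe_finset _
  have := hcard _ le_rfl
  omega

lemma finite_lists {α : Type} {s : Set α} (hs : s.Finite) (L : ℕ) :
    {l : List α | (∀ x ∈ l, x ∈ s) ∧ l.length ≤ L}.Finite := by
  classical
  haveI := hs.to_subtype
  have hsub : {l : List α | (∀ x ∈ l, x ∈ s) ∧ l.length ≤ L} ⊆
      (List.map (Subtype.val : s → α)) '' {l : List s | l.length ≤ L} := by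
    rintro l ⟨h1, h2⟩
    refine ⟨l.pmap (fun x hx => (⟨x, hx⟩ : s)) h1, ?_, ?_⟩
    · simpa using h2
    · rw [List.map_pmap]
      simpa using (List.pmap_eq_map _ id l h1).trans (List.map_id l)
  exact ((List.finite_length_le s L).image _).subset hsub

/-- If every 1-cell of a cell complex is adjacent to finitely many
2-cells and the homological Dehn function over ℤ is finite-valued, then the
1-skeleton is fine. -/
theorem fine_of_finite_FV (X : TwoComplex)
    (hbd : ∀ f : X.F, X.toCGraph.d1 (X.fb f) = 0)
    (hadj : ∀ e : X.E, {f : X.F | X.fb f e ≠ 0}.Finite)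
    (hFV : ∀ k : ℕ, X.FV k < ⊤) :
    X.toCGraph.Fine := by
  classical
  intro e L
  set M := (X.FV L).toNat with hMdef
  have hMeq : (M : ℕ∞) = X.FV L := ENat.coe_toNat (hFV L).ne
  have hAfin : (Aset X e M).Finite := Aset_finite X hadj e M
  set EA : Set X.E := {e} ∪ ⋃ f ∈ Aset X e M, ((X.fb f).support : Set X.E) with hEAdef
  have hEAfin : EA.Finite := (Set.finite_singleton e).union
    (hAfin.biUnion fun f _ => (X.fb f).support.finite_toSet)
  have key : ∀ l : List (X.E × Bool), X.toCGraph.IsCircuit l → e ∈ l.map Prod.fst →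
      l.length ≤ L → ∀ p ∈ l, p.1 ∈ EA := by
    intro l hc hel hlen
    set γ := X.toCGraph.pathCycle l with hγdef
    have hcyc : X.toCGraph.IsCycle γ := d1_pathCycle _ l hc.1
    have hl1 : l1Z γ ≤ L := le_trans (l1Z_pathCycle_le _ l) hlen
    have hγe : γ e ≠ 0 := by
      obtain ⟨p₀, hp₀, hp₀e⟩ := List.mem_map.mp hel
      have hv := pathCycle_apply_mem X.toCGraph hc.2.1 hp₀
      rw [← hp₀e]
      rw [hγdef, hv]
      cases p₀.2 <;> simp
    have hfill : X.fillNorm γ ≤ X.FV L :=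
      le_iSup₂ (f := fun γ' (_ : γ' ∈ {γ' : X.E →₀ ℤ |
        X.toCGraph.IsCycle γ' ∧ l1Z γ' ≤ L}) => X.fillNorm γ') γ ⟨hcyc, hl1⟩
    have hfill2 : X.fillNorm γ < (M : ℕ∞) + 1 := by
      calc X.fillNorm γ ≤ (M : ℕ∞) := hMeq ▸ hfill
        _ < (M : ℕ∞) + 1 := by
          have : ((M : ℕ) : ℕ∞) < ((M + 1 : ℕ) : ℕ∞) := Nat.cast_lt.mpr (Nat.lt_succ_self M)
          simpa using this
    obtain ⟨μ, hμmem, hμlt⟩ : ∃ μ, ∃ _ : μ ∈ {μ : X.F →₀ ℤ | X.d2 μ = γ},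
        ((l1Z μ : ℕ∞) < (M : ℕ∞) + 1) := by
      rw [TwoComplex.fillNorm] at hfill2
      obtain ⟨μ, hμ⟩ := iInf_lt_iff.mp hfill2
      obtain ⟨hm, hlt⟩ := iInf_lt_iff.mp hμ
      exact ⟨μ, hm, hlt⟩
    have hμd2 : X.d2 μ = γ := hμmem
    have hμl1 : l1Z μ ≤ M := by
      have h : (l1Z μ : ℕ∞) < ((M + 1 : ℕ) : ℕ∞) := by
        simpa using hμlt
      have := Nat.cast_lt.mp h
      omega
    have hC0 : (Cset X e μ 0).Nonempty := by
      by_contra hcon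
      rw [Set.not_nonempty_iff_eq_empty] at hcon
      apply hγe
      rw [← hμd2, d2_apply]
      apply Finset.sum_eq_zero
      intro f hf
      have hμf : μ f ≠ 0 := Finsupp.mem_support_iff.mp hf
      by_cases hfb : X.fb f e = 0
      · rw [hfb, mul_zero]
      · have hmem : f ∈ Cset X e μ 0 := ⟨hμf, hfb⟩
        rw [hcon] at hmem
        exact absurd hmem (Set.notMem_empty f)
    obtain ⟨n₀, hn₀card, hstab⟩ := Cset_stable_exists X e μ hC0
    have hn₀M : n₀ ≤ M := hn₀card.trans ((support_card_le_l1Z μ).trans hμl1)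
    set Cf := Cset X e μ n₀ with hCfdef
    set μC := Finsupp.filter (· ∈ Cf) μ with hμCdef
    set μR := Finsupp.filter (fun f => ¬ (f ∈ Cf)) μ with hμRdef
    have hsplit : μC + μR = μ := Finsupp.filter_pos_add_filter_neg μ _
    have hd2add : X.d2 μC + X.d2 μR = γ := by
      rw [← hμd2, ← hsplit, d2_eq_lm X (μC + μR), map_add, ← d2_eq_lm, ← d2_eq_lm]
    set γ' := X.d2 μC with hγ'def
    have hμC0 : ∀ f, f ∉ Cf → μC f = 0 := fun f hf =>
      Finsupp.filter_apply_neg _ μ hf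
    have hsupγ' : ∀ e'', γ' e'' ≠ 0 → ∃ f ∈ Cf, X.fb f e'' ≠ 0 := by
      intro e'' h
      by_contra hcon
      push_neg at hcon
      apply h
      rw [hγ'def, d2_apply]
      apply Finset.sum_eq_zero
      intro f hf
      have hfC : f ∈ Cf := by
        by_contra hfc
        exact Finsupp.mem_support_iff.mp hf (hμC0 f hfc)
      rw [hcon f hfC, mul_zero]
    have hclosed : ∀ f, μ f ≠ 0 →
        (∃ g ∈ Cf, ∃ e'', X.fb g e'' ≠ 0 ∧ X.fb f e'' ≠ 0) → f ∈ Cf := by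
      intro f hf hg
      have h : f ∈ Cset X e μ (n₀ + 1) := Or.inr ⟨hf, hg⟩
      rw [hCfdef]
      rwa [← hstab] at h
    have hμRsupp : ∀ g, μR g ≠ 0 → μ g ≠ 0 ∧ g ∉ Cf := by
      intro g hg
      by_cases hgC : g ∈ Cf
      · exact absurd (Finsupp.filter_apply_neg (fun f => ¬ f ∈ Cf) μ (not_not_intro hgC)) hg
      · refine ⟨?_, hgC⟩
        intro hμg
        apply hg
        rw [hμRdef, Finsupp.filter_apply_pos (fun f => ¬ f ∈ Cf) μ hgC, hμg]
    have h1 : ∀ e'', γ' e'' = 0 ∨ γ' e'' = γ e'' := by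
      intro e''
      by_cases h : γ' e'' = 0
      · exact Or.inl h
      right
      obtain ⟨f, hfC, hfb⟩ := hsupγ' e'' h
      have hR : X.d2 μR e'' = 0 := by
        rw [d2_apply]
        apply Finset.sum_eq_zero
        intro g hgs
        obtain ⟨hgμ, hgC⟩ := hμRsupp g (Finsupp.mem_support_iff.mp hgs)
        by_cases hgb : X.fb g e'' = 0
        · rw [hgb, mul_zero]
        · exact absurd (hclosed g hgμ ⟨f, hfC, e'', hfb, hgb⟩) hgC
      have hh := congrArg (fun φ : X.E →₀ ℤ => φ e'') hd2add
      simpa [Finsupp.add_apply, hR] using hh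
    have hγ'e : γ' e ≠ 0 := by
      have hR : X.d2 μR e = 0 := by
        rw [d2_apply]
        apply Finset.sum_eq_zero
        intro g hgs
        obtain ⟨hgμ, hgC⟩ := hμRsupp g (Finsupp.mem_support_iff.mp hgs)
        by_cases hgb : X.fb g e = 0
        · rw [hgb, mul_zero]
        · exact absurd (Cset_mono X e μ (Nat.zero_le n₀)
            ((⟨hgμ, hgb⟩ : g ∈ Cset X e μ 0))) hgC
      have hh := congrArg (fun φ : X.E →₀ ℤ => φ e) hd2add
      simp only [Finsupp.add_apply, hR, add_zero] at hh
      rw [hh]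
      exact hγe
    have h2 : X.toCGraph.d1 γ' = 0 := d1_d2_eq_zero X hbd μC
    have hall := circuit_support X.toCGraph hc h1 h2 hel hγ'e
    intro p hp
    obtain ⟨f, hfC, hfb⟩ := hsupγ' p.1 (hall p hp)
    have hfA : f ∈ Aset X e M := Aset_mono X e hn₀M (Cset_subset_Aset X e μ n₀ hfC)
    rw [hEAdef]
    exact Set.mem_union_right _
      (Set.mem_biUnion hfA (Finset.mem_coe.mpr (Finsupp.mem_support_iff.mpr hfb)))
  have hEABfin : {q : X.E × Bool | q.1 ∈ EA}.Finite := by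
    have hsub : {q : X.E × Bool | q.1 ∈ EA} ⊆ EA ×ˢ (Set.univ : Set Bool) :=
      fun q hq => ⟨hq, trivial⟩
    exact (hEAfin.prod Set.finite_univ).subset hsub
  refine (finite_lists hEABfin L).subset ?_
  rintro l ⟨hc, hel, hlen⟩
  exact ⟨fun q hq => key l hc hel hlen q hq, hlen⟩
end

section
/- A cell complex X satisfies a linear homological isoperimetric inequality over 𝕂 (i.e., there is A ≥ 0 with FV_{X,𝕂}(k) ≤ A·k for all k) if and only if there is a constant A' ≥ 0 such that for every circuit c in the 1-skeleton of X there exists β ∈ C₂(X, 𝕂) with ∂β equal to the 1-cycle induced by c and ‖β‖₁ ≤ A'·|c|. -/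
open Finsupp

/-- ℓ¹-norm of a chain with coefficients in an ordered ring 𝕂. -/
def l1K {α : Type} {K : Type} [CommRing K] [LinearOrder K] [IsStrictOrderedRing K] (c : α →₀ K) : K :=
  c.sum fun _ v => |v|

/-- Base change ℤ → 𝕂 of chains. -/
noncomputable def castZK {α : Type} {K : Type} [CommRing K] [LinearOrder K] [IsStrictOrderedRing K]
    (c : α →₀ ℤ) : α →₀ K :=
  c.mapRange Int.cast Int.cast_zero

/-- The boundary map C₂ → C₁ over 𝕂. -/
noncomputable def TwoComplex.d2K (X : TwoComplex) {K : Type} [CommRing K] [LinearOrder K] [IsStrictOrderedRing K]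
    (μ : X.F →₀ K) : X.E →₀ K :=
  μ.sum fun f c => c • castZK (X.fb f)

lemma l1Z_eq_sum {α : Type} (c : α →₀ ℤ) {s : Finset α} (h : c.support ⊆ s) :
    l1Z c = ∑ x ∈ s, (c x).natAbs :=
  Finsupp.sum_of_support_subset c h _ (fun _ _ => rfl)

lemma l1K_eq_sum {α K : Type} [CommRing K] [LinearOrder K] [IsStrictOrderedRing K] (c : α →₀ K) {s : Finset α}
    (h : c.support ⊆ s) : l1K c = ∑ x ∈ s, |c x| :=
  Finsupp.sum_of_support_subset c h _ (fun _ _ => abs_zero)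

lemma l1K_add_le {α K : Type} [CommRing K] [LinearOrder K] [IsStrictOrderedRing K] (a b : α →₀ K) :
    l1K (a + b) ≤ l1K a + l1K b := by
  classical
  set s := a.support ∪ b.support with hs
  have hab : (a + b).support ⊆ s := Finsupp.support_add
  rw [l1K_eq_sum _ hab, l1K_eq_sum a (Finset.subset_union_left),
    l1K_eq_sum b (Finset.subset_union_right), ← Finset.sum_add_distrib]
  exact Finset.sum_le_sum fun x _ => by simpa using abs_add_le (a x) (b x)

lemma l1K_zero {α K : Type} [CommRing K] [LinearOrder K] [IsStrictOrderedRing K] : l1K (0 : α →₀ K) = 0 := by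
  simp [l1K]

lemma l1Z_eq_add {α : Type} (a b c : α →₀ ℤ) (h : a = b + c)
    (hpt : ∀ x, (a x).natAbs = (b x).natAbs + (c x).natAbs) :
    l1Z a = l1Z b + l1Z c := by
  classical
  set s := a.support ∪ b.support ∪ c.support with hs
  have ha : a.support ⊆ s := by intro x hx; simp [hs, Finsupp.mem_support_iff] at hx ⊢; tauto
  have hb : b.support ⊆ s := by intro x hx; simp [hs, Finsupp.mem_support_iff] at hx ⊢; tauto
  have hc : c.support ⊆ s := by intro x hx; simp [hs, Finsupp.mem_support_iff] at hx ⊢; tauto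
  rw [l1Z_eq_sum a ha, l1Z_eq_sum b hb, l1Z_eq_sum c hc, ← Finset.sum_add_distrib]
  exact Finset.sum_congr rfl fun x _ => hpt x

lemma castZK_add {α K : Type} [CommRing K] [LinearOrder K] [IsStrictOrderedRing K] (a b : α →₀ ℤ) :
    castZK (a + b) = (castZK a + castZK b : α →₀ K) :=
  Finsupp.mapRange_add (by push_cast; simp) a b

lemma castZK_zero {α K : Type} [CommRing K] [LinearOrder K] [IsStrictOrderedRing K] :
    castZK (0 : α →₀ ℤ) = (0 : α →₀ K) := Finsupp.mapRange_zero

namespace CGraph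
variable (Γ : CGraph)

noncomputable def d1hom : (Γ.E →₀ ℤ) →ₗ[ℤ] (Γ.V →₀ ℤ) :=
  Finsupp.linearCombination ℤ fun e =>
    Finsupp.single (Γ.ends e).2 (1 : ℤ) - Finsupp.single (Γ.ends e).1 1

lemma d1_eq (γ : Γ.E →₀ ℤ) : Γ.d1 γ = Γ.d1hom γ := rfl

lemma d1_sub (a b : Γ.E →₀ ℤ) : Γ.d1 (a - b) = Γ.d1 a - Γ.d1 b := by
  simp [d1_eq, map_sub]

lemma d1_single (e : Γ.E) (c : ℤ) :
    Γ.d1 (Finsupp.single e c) =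
      c • (Finsupp.single (Γ.ends e).2 (1 : ℤ) - Finsupp.single (Γ.ends e).1 1) := by
  rw [d1_eq]; exact Finsupp.linearCombination_single ℤ c e

end CGraph

namespace CGraph
variable (Γ : CGraph)

lemma pathCycle_cons (p : Γ.E × Bool) (l : List (Γ.E × Bool)) :
    Γ.pathCycle (p :: l) =
      Finsupp.single p.1 (if p.2 then (1:ℤ) else -1) + Γ.pathCycle l := by
  simp [pathCycle]

lemma pathCycle_apply_not_mem {l : List (Γ.E × Bool)} {e : Γ.E}
    (he : e ∉ l.map Prod.fst) : Γ.pathCycle l e = 0 := by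
  classical
  induction l with
  | nil => simp [pathCycle]
  | cons p l ih =>
    simp only [List.map_cons, List.mem_cons] at he
    push_neg at he
    rw [pathCycle_cons, Finsupp.add_apply, Finsupp.single_apply,
      if_neg (fun h => he.1 h.symm), ih he.2, add_zero]

lemma pathCycle_apply_mem {l : List (Γ.E × Bool)} (hnd : (l.map Prod.fst).Nodup)
    {p : Γ.E × Bool} (hp : p ∈ l) :
    Γ.pathCycle l p.1 = if p.2 then (1:ℤ) else -1 := by
  classical
  induction l with
  | nil => simp at hp
  | cons q l ih =>
    simp only [List.map_cons, List.nodup_cons] at hnd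
    rcases List.mem_cons.mp hp with h | h
    · subst h
      rw [pathCycle_cons, Finsupp.add_apply, Finsupp.single_apply, if_pos rfl,
        pathCycle_apply_not_mem Γ hnd.1, add_zero]
    · have hne : q.1 ≠ p.1 := fun hq => hnd.1 (hq ▸ List.mem_map_of_mem (f := Prod.fst) h)
      rw [pathCycle_cons, Finsupp.add_apply, Finsupp.single_apply, if_neg hne,
        ih hnd.2 h, zero_add]

lemma pathCycle_support (l : List (Γ.E × Bool)) [DecidableEq Γ.E] :
    (Γ.pathCycle l).support ⊆ (l.map Prod.fst).toFinset := by
  intro e he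
  rw [Finsupp.mem_support_iff] at he
  by_contra h
  exact he (Γ.pathCycle_apply_not_mem (by simpa using h))

lemma l1Z_pathCycle {l : List (Γ.E × Bool)} (hnd : (l.map Prod.fst).Nodup) :
    l1Z (Γ.pathCycle l) = l.length := by
  classical
  rw [l1Z_eq_sum _ (Γ.pathCycle_support l)]
  have : ∀ e ∈ (l.map Prod.fst).toFinset, ((Γ.pathCycle l) e).natAbs = 1 := by
    intro e he
    rw [List.mem_toFinset, List.mem_map] at he
    obtain ⟨p, hp, rfl⟩ := he
    rw [pathCycle_apply_mem Γ hnd hp]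
    split <;> rfl
  rw [Finset.sum_congr rfl this, Finset.sum_const, smul_eq_mul, mul_one,
    List.toFinset_card_of_nodup hnd, List.length_map]

lemma list_sum_map_sub {α M : Type} [AddCommGroup M] (f g : α → M) (l : List α) :
    (l.map fun x => f x - g x).sum = (l.map f).sum - (l.map g).sum := by
  induction l with
  | nil => simp
  | cons a l ih => simp [ih]; abel

lemma d1_pathCycle {l : List (Γ.E × Bool)} (hl : Γ.IsClosedPath l) :
    Γ.d1 (Γ.pathCycle l) = 0 := by
  have hmap : Γ.d1 (Γ.pathCycle l) =
      (l.map fun p => Finsupp.single (Γ.tgt p) (1:ℤ) - Finsupp.single (Γ.src p) 1).sum := by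
    rw [d1_eq, pathCycle, map_list_sum, List.map_map]
    congr 1
    apply List.map_congr_left
    intro p _
    show Γ.d1hom (Finsupp.single p.1 _) = _
    rw [← d1_eq, d1_single]
    rcases p with ⟨e, b⟩
    cases b <;> simp [src, tgt] <;> abel
  rw [hmap, list_sum_map_sub]
  have hrot : l.map Γ.tgt = (l.map Γ.src).rotate 1 := by
    apply List.ext_getElem
    · simp
    · intro n h1 h2
      have hn : n < l.length := by simpa using h1
      rw [List.getElem_rotate]
      simp only [List.getElem_map]
      have := hl.2 ⟨n, hn⟩
      simp only [List.get_eq_getElem] at this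
      rw [this]
      congr 1
      simp
  have : (l.map fun p => Finsupp.single (Γ.tgt p) (1:ℤ)).sum
      = (l.map fun p => Finsupp.single (Γ.src p) (1:ℤ)).sum := by
    have h1 : (l.map fun p => Finsupp.single (Γ.tgt p) (1:ℤ))
        = ((l.map fun p => Finsupp.single (Γ.src p) (1:ℤ)).rotate 1) := by
      have e1 : (l.map fun p => Finsupp.single (Γ.tgt p) (1:ℤ))
          = (l.map Γ.tgt).map (fun v => Finsupp.single v (1:ℤ)) := by
        rw [List.map_map]; rfl
      rw [e1, hrot, ← List.map_rotate, ← List.map_rotate, List.map_map]; rfl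
    rw [h1]
    exact (List.rotate_perm _ 1).sum_eq
  rw [this, sub_self]

end CGraph

namespace CGraph
variable (Γ : CGraph)

def Active (γ : Γ.E →₀ ℤ) (p : Γ.E × Bool) : Prop :=
  if p.2 then 0 < γ p.1 else γ p.1 < 0

lemma Active.mem_support {Γ : CGraph} {γ : Γ.E →₀ ℤ} {p : Γ.E × Bool}
    (h : Γ.Active γ p) : p.1 ∈ γ.support := by
  rcases p with ⟨e, b⟩
  rw [Finsupp.mem_support_iff]
  show γ e ≠ 0
  cases b <;> simp [Active] at h <;> omega

lemma Active.eq_of_fst_eq {Γ : CGraph} {γ : Γ.E →₀ ℤ} {p q : Γ.E × Bool}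
    (hp : Γ.Active γ p) (hq : Γ.Active γ q) (h : p.1 = q.1) : p = q := by
  rcases p with ⟨e, b⟩; rcases q with ⟨e', b'⟩
  cases h
  cases b <;> cases b' <;> simp_all [Active] <;> omega

lemma exists_active {γ : Γ.E →₀ ℤ} (h : γ ≠ 0) : ∃ p, Γ.Active γ p := by
  classical
  obtain ⟨e, he⟩ : ∃ e, γ e ≠ 0 := by
    by_contra hall
    push_neg at hall
    exact h (Finsupp.ext fun e => hall e)
  rcases lt_or_gt_of_ne he with h1 | h1
  · exact ⟨(e, false), by simpa [Active] using h1⟩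
  · exact ⟨(e, true), by simpa [Active] using h1⟩

lemma flow {γ : Γ.E →₀ ℤ} (hc : Γ.IsCycle γ) {p : Γ.E × Bool}
    (hp : Γ.Active γ p) : ∃ q, Γ.Active γ q ∧ Γ.src q = Γ.tgt p := by
  classical
  by_contra hno
  push_neg at hno
  set v := Γ.tgt p with hv
  have h0 : (Γ.d1 γ) v = 0 := by rw [hc]; simp
  have hsum : (Γ.d1 γ) v = ∑ e ∈ γ.support,
      γ e * ((if (Γ.ends e).2 = v then (1:ℤ) else 0) - (if (Γ.ends e).1 = v then 1 else 0)) := by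
    rw [d1, Finsupp.sum_apply, Finsupp.sum]
    refine Finset.sum_congr rfl fun e _ => ?_
    simp [Finsupp.single_apply, mul_sub]
  -- no active edge has source v
  have hsrc : ∀ e, (0 < γ e → (Γ.ends e).1 ≠ v) ∧ (γ e < 0 → (Γ.ends e).2 ≠ v) := by
    intro e
    constructor
    · intro hpos
      have := hno (e, true) (by simpa [Active] using hpos)
      simpa [src] using this
    · intro hneg
      have := hno (e, false) (by simpa [Active] using hneg)
      simpa [src] using this
  have hnonneg : ∀ e ∈ γ.support, 0 ≤
      γ e * ((if (Γ.ends e).2 = v then (1:ℤ) else 0) - (if (Γ.ends e).1 = v then 1 else 0)) := by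
    intro e _
    rcases lt_trichotomy (γ e) 0 with h1 | h1 | h1
    · rw [if_neg ((hsrc e).2 h1)]
      split_ifs <;> nlinarith
    · simp [h1]
    · rw [if_neg (fun hh => (hsrc e).1 h1 hh)]
      split_ifs <;> nlinarith
  have hwitness : ∃ e ∈ γ.support, 0 <
      γ e * ((if (Γ.ends e).2 = v then (1:ℤ) else 0) - (if (Γ.ends e).1 = v then 1 else 0)) := by
    refine ⟨p.1, hp.mem_support, ?_⟩
    rcases p with ⟨e, b⟩
    cases b
    · have h1 : γ e < 0 := by simpa [Active] using hp
      have h2 : (Γ.ends e).1 = v := by simp [hv, tgt]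
      rw [if_pos h2, if_neg ((hsrc e).2 h1)]
      nlinarith
    · have h1 : 0 < γ e := by simpa [Active] using hp
      have h2 : (Γ.ends e).2 = v := by simp [hv, tgt]
      rw [if_pos h2, if_neg ((hsrc e).1 h1)]
      nlinarith
  have := Finset.sum_pos' hnonneg hwitness
  rw [← hsum, h0] at this
  exact lt_irrefl 0 this

end CGraph

namespace CGraph
variable (Γ : CGraph)

lemma exists_circuit {γ : Γ.E →₀ ℤ} (hc : Γ.IsCycle γ) (h0 : γ ≠ 0) :
    ∃ l, Γ.IsCircuit l ∧ ∀ p ∈ l, Γ.Active γ p := by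
  classical
  obtain ⟨p₀, hp₀⟩ := Γ.exists_active h0
  let F : {p // Γ.Active γ p} → {p // Γ.Active γ p} := fun p =>
    ⟨(Γ.flow hc p.2).choose, (Γ.flow hc p.2).choose_spec.1⟩
  let f : ℕ → {p // Γ.Active γ p} := fun n => F^[n] ⟨p₀, hp₀⟩
  have hchain : ∀ n, Γ.src (f (n+1)).1 = Γ.tgt (f n).1 := by
    intro n
    have hfn : f (n+1) = F (f n) := Function.iterate_succ_apply' F n _
    rw [hfn]
    exact (Γ.flow hc (f n).2).choose_spec.2
  set v : ℕ → Γ.V := fun n => Γ.src (f n).1 with hvdef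
  have hfin : (Set.range v).Finite := by
    apply Set.Finite.subset (Set.Finite.image Γ.src
      ((γ.support.finite_toSet.prod (Set.finite_univ (α := Bool)))))
    rintro _ ⟨n, rfl⟩
    exact ⟨(f n).1, ⟨(f n).2.mem_support, Set.mem_univ _⟩, rfl⟩
  have hrep : ∃ j, ∃ i, i < j ∧ v i = v j := by
    obtain ⟨a, -, b, -, hab, h⟩ :=
      Set.infinite_univ.exists_ne_map_eq_of_mapsTo
        (fun n _ => Set.mem_range_self n) hfin
    rcases Nat.lt_or_ge a b with h1 | h1
    · exact ⟨b, a, h1, h⟩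
    · exact ⟨a, b, lt_of_le_of_ne h1 (Ne.symm hab), h.symm⟩
  set j := Nat.find hrep with hjdef
  obtain ⟨i, hij, hvij⟩ := Nat.find_spec hrep
  have hmin : ∀ k l, l < k → k < j → v l ≠ v k := by
    intro k l h1 h2 hcon
    exact Nat.find_min hrep h2 ⟨l, h1, hcon⟩
  have hvinj : ∀ k k', k < j - i → k' < j - i → v (i + k) = v (i + k') → k = k' := by
    intro k k' hk hk' h
    by_contra hne
    rcases Nat.lt_or_ge k k' with h1 | h1
    · exact hmin (i + k') (i + k) (by omega) (by omega) h
    · exact hmin (i + k) (i + k') (by omega) (by omega) h.symm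
  set L : List (Γ.E × Bool) := (List.range (j - i)).map (fun k => (f (i + k)).1) with hLdef
  have hlen : L.length = j - i := by simp [hLdef]
  have hpos : 0 < j - i := Nat.sub_pos_of_lt hij
  have hgetL : ∀ (k : ℕ) (h : k < L.length), L.get ⟨k, h⟩ = (f (i + k)).1 := by
    intro k h
    simp [hLdef]
  have hclosed : Γ.IsClosedPath L := by
    refine ⟨?_, ?_⟩
    · intro hnil
      rw [hnil] at hlen
      simp at hlen
      omega
    · intro idx
      obtain ⟨k, hk⟩ := idx
      rw [hgetL, hgetL, ← hchain (i + k)]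
      show v (i + k + 1) = v (i + ((k + 1) % L.length))
      rcases Nat.lt_or_ge (k + 1) (j - i) with h1 | h1
      · have hmod : (k + 1) % L.length = k + 1 := Nat.mod_eq_of_lt (by omega)
        rw [hmod]
        congr 1
      · have hkj : k < j - i := by rwa [hlen] at hk
        have hk1 : k + 1 = j - i := by omega
        have hmod : (k + 1) % L.length = 0 := by rw [hlen, hk1, Nat.mod_self]
        rw [hmod]
        have h2 : i + k + 1 = j := by omega
        have h3 : i + 0 = i := rfl
        rw [h2, h3]
        exact hvij.symm
  have hmemL : ∀ p ∈ L, Γ.Active γ p := by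
    intro p hp
    rw [hLdef, List.mem_map] at hp
    obtain ⟨k, _, rfl⟩ := hp
    exact (f (i + k)).2
  have hsrcmap : L.map Γ.src = (List.range (j - i)).map (fun k => v (i + k)) := by
    rw [hLdef, List.map_map]
    rfl
  have hsrcnd : (L.map Γ.src).Nodup := by
    rw [hsrcmap]
    refine List.Nodup.map_on ?_ (List.nodup_range (n := _))
    intro k hk k' hk' h
    exact hvinj k k' (List.mem_range.mp hk) (List.mem_range.mp hk') h
  have hfstnd : (L.map Prod.fst).Nodup := by
    have hfstmap : L.map Prod.fst = (List.range (j - i)).map (fun k => (f (i + k)).1.1) := by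
      rw [hLdef, List.map_map]
      rfl
    rw [hfstmap]
    refine List.Nodup.map_on ?_ (List.nodup_range (n := _))
    intro k hk k' hk' h
    have heq : (f (i + k)).1 = (f (i + k')).1 :=
      Active.eq_of_fst_eq (f (i + k)).2 (f (i + k')).2 h
    exact hvinj k k' (List.mem_range.mp hk) (List.mem_range.mp hk')
      (congrArg Γ.src heq)
  exact ⟨L, ⟨hclosed, hfstnd, hsrcnd⟩, hmemL⟩

end CGraph

namespace TwoComplex
variable (X : TwoComplex)

noncomputable def d2Khom (K : Type) [CommRing K] [LinearOrder K] [IsStrictOrderedRing K] :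
    (X.F →₀ K) →ₗ[K] (X.E →₀ K) :=
  Finsupp.linearCombination K fun f => castZK (X.fb f)

lemma d2K_eq {K : Type} [CommRing K] [LinearOrder K] [IsStrictOrderedRing K] (μ : X.F →₀ K) :
    X.d2K μ = X.d2Khom K μ := rfl

lemma d2K_add {K : Type} [CommRing K] [LinearOrder K] [IsStrictOrderedRing K] (a b : X.F →₀ K) :
    X.d2K (a + b) = X.d2K a + X.d2K b := by
  simp [d2K_eq, map_add]

lemma d2K_zero {K : Type} [CommRing K] [LinearOrder K] [IsStrictOrderedRing K] :
    X.d2K (0 : X.F →₀ K) = 0 := by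
  simp [d2K_eq, map_zero]

/-- Core of the backward direction: fill any integral cycle using circuit fillings. -/
lemma fill_of_circuit_fill {K : Type} [CommRing K] [LinearOrder K] [IsStrictOrderedRing K] (A : K) (hA : 0 ≤ A)
    (hcirc : ∀ l : List (X.E × Bool), X.toCGraph.IsCircuit l →
      ∃ β : X.F →₀ K, X.d2K β = castZK (X.toCGraph.pathCycle l) ∧
        l1K β ≤ A * (l.length : K)) :
    ∀ (n : ℕ) (γ : X.E →₀ ℤ), l1Z γ ≤ n → X.toCGraph.IsCycle γ →
      ∃ β : X.F →₀ K, X.d2K β = castZK γ ∧ l1K β ≤ A * (l1Z γ : K) := by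
  intro n
  induction n with
  | zero =>
    intro γ hγ _
    have h0 : γ = 0 := by
      ext e
      by_contra he
      have hmem : e ∈ γ.support := Finsupp.mem_support_iff.mpr (by simpa using he)
      have : 1 ≤ l1Z γ := by
        rw [l1Z_eq_sum γ (subset_refl _)]
        calc 1 ≤ (γ e).natAbs := by
              have := Finsupp.mem_support_iff.mp hmem
              omega
          _ ≤ _ := Finset.single_le_sum (f := fun x => (γ x).natAbs)
              (fun _ _ => Nat.zero_le _) hmem
      omega
    subst h0
    exact ⟨0, by rw [d2K_zero, castZK_zero], by rw [l1K_zero]; positivity⟩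
  | succ n ih =>
    intro γ hγ hcyc
    by_cases h0 : γ = 0
    · subst h0
      exact ⟨0, by rw [d2K_zero, castZK_zero], by rw [l1K_zero]; positivity⟩
    obtain ⟨l, hlcirc, hlact⟩ := X.toCGraph.exists_circuit hcyc h0
    obtain ⟨βc, hβc, hβcnorm⟩ := hcirc l hlcirc
    set c := X.toCGraph.pathCycle l with hcdef
    set γ' := γ - c with hγ'def
    -- pointwise norm decomposition
    have hpt : ∀ e, (γ e).natAbs = (γ' e).natAbs + (c e).natAbs := by
      intro e
      by_cases he : e ∈ l.map Prod.fst
      · obtain ⟨p, hp, rfl⟩ := List.mem_map.mp he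
        have hcoef : c p.1 = if p.2 then (1:ℤ) else -1 :=
          X.toCGraph.pathCycle_apply_mem hlcirc.2.1 hp
        have hact := hlact p hp
        have hγ'e : γ' p.1 = γ p.1 - c p.1 := by simp [hγ'def]
        rcases p with ⟨e, b⟩
        have hγ'e2 : γ' e = γ e - c e := hγ'e
        cases b
        · have h1 : γ e < 0 := by simpa [CGraph.Active] using hact
          have hcoef2 : c e = -1 := by simpa using hcoef
          show (γ e).natAbs = (γ' e).natAbs + (c e).natAbs
          rw [hγ'e2, hcoef2]
          omega
        · have h1 : 0 < γ e := by simpa [CGraph.Active] using hact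
          have hcoef2 : c e = 1 := by simpa using hcoef
          show (γ e).natAbs = (γ' e).natAbs + (c e).natAbs
          rw [hγ'e2, hcoef2]
          omega
      · have hce : c e = 0 := X.toCGraph.pathCycle_apply_not_mem he
        have hγ'e : γ' e = γ e := by simp [hγ'def, hce]
        rw [hγ'e, hce]
        simp
    have hsplit : l1Z γ = l1Z γ' + l1Z c :=
      l1Z_eq_add γ γ' c (by rw [hγ'def]; abel) hpt
    have hclen : l1Z c = l.length := X.toCGraph.l1Z_pathCycle hlcirc.2.1
    have hlpos : 0 < l.length := List.length_pos_iff.mpr hlcirc.1.1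
    have hγ'cyc : X.toCGraph.IsCycle γ' := by
      rw [CGraph.IsCycle, hγ'def, CGraph.d1_sub, hcyc, X.toCGraph.d1_pathCycle hlcirc.1,
        sub_zero]
    have hγ'n : l1Z γ' ≤ n := by omega
    obtain ⟨β', hβ', hβ'norm⟩ := ih γ' hγ'n hγ'cyc
    refine ⟨β' + βc, ?_, ?_⟩
    · rw [X.d2K_add, hβ', hβc, ← castZK_add]
      congr 1
      rw [hγ'def]
      abel
    · calc l1K (β' + βc) ≤ l1K β' + l1K βc := l1K_add_le _ _
        _ ≤ A * (l1Z γ' : K) + A * (l.length : K) := add_le_add hβ'norm hβcnorm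
        _ = A * (l1Z γ : K) := by
            rw [hsplit, hclen]
            push_cast
            ring

end TwoComplex

/-- X satisfies a linear homological isoperimetric inequality over 𝕂
(every integral 1-cycle γ has a 𝕂-filling of norm at most A·‖γ‖₁, i.e. FV_{X,𝕂}(k) ≤ A·k)
iff there is A' such that every circuit c bounds a 𝕂-chain of norm at most A'·|c|. -/
theorem linear_isoperimetric_iff_circuit_filling (X : TwoComplex)
    (K : Type) [CommRing K] [LinearOrder K] [IsStrictOrderedRing K] :
    (∃ A : K, 0 ≤ A ∧ ∀ γ : X.E →₀ ℤ, X.toCGraph.IsCycle γ →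
        ∃ β : X.F →₀ K, X.d2K β = castZK γ ∧ l1K β ≤ A * (l1Z γ : K)) ↔
    (∃ A : K, 0 ≤ A ∧ ∀ l : List (X.E × Bool), X.toCGraph.IsCircuit l →
        ∃ β : X.F →₀ K, X.d2K β = castZK (X.toCGraph.pathCycle l) ∧
          l1K β ≤ A * (l.length : K)) := by
  constructor
  · rintro ⟨A, hA, H⟩
    refine ⟨A, hA, fun l hl => ?_⟩
    have hcyc : X.toCGraph.IsCycle (X.toCGraph.pathCycle l) :=
      X.toCGraph.d1_pathCycle hl.1
    obtain ⟨β, hβ, hβnorm⟩ := H _ hcyc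
    refine ⟨β, hβ, ?_⟩
    rwa [X.toCGraph.l1Z_pathCycle hl.2.1] at hβnorm
  · rintro ⟨A, hA, H⟩
    exact ⟨A, hA, fun γ hγ => X.fill_of_circuit_fill A hA H (l1Z γ) γ le_rfl hγ⟩
end

section
/- Let Γ be a fine graph equipped with a cocompact G-action (finitely many orbits of edges). Then for each positive integer n, the G-action on the set of circuits of Γ of length at most n has only finitely many orbits. -/
open Finsupp

/-- An action of a group `G` on a graph `Γ` by graph automorphisms. -/
structure GraphAction (G : Type) [Group G] (Γ : CGraph) where
  vMap : G → Γ.V ≃ Γ.V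
  eMap : G → Γ.E ≃ Γ.E
  vMap_mul : ∀ g h v, vMap (g * h) v = vMap g (vMap h v)
  eMap_mul : ∀ g h e, eMap (g * h) e = eMap g (eMap h e)
  ends_eq : ∀ g e, Γ.ends (eMap g e) = (vMap g (Γ.ends e).1, vMap g (Γ.ends e).2)


lemma GraphAction.src_map {G : Type} [Group G] {Γ : CGraph} (A : GraphAction G Γ) (g : G)
    (p : Γ.E × Bool) : Γ.src (A.eMap g p.1, p.2) = A.vMap g (Γ.src p) := by
  obtain ⟨e, b⟩ := p
  cases b <;> simp [CGraph.src, A.ends_eq]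

lemma GraphAction.tgt_map {G : Type} [Group G] {Γ : CGraph} (A : GraphAction G Γ) (g : G)
    (p : Γ.E × Bool) : Γ.tgt (A.eMap g p.1, p.2) = A.vMap g (Γ.tgt p) := by
  obtain ⟨e, b⟩ := p
  cases b <;> simp [CGraph.tgt, A.ends_eq]

/-- If a fine graph admits a cocompact G-action (finitely many orbits
of edges), then for each n the induced action on circuits of length at most n has
finitely many orbits. -/
theorem finitely_many_circuit_orbits (G : Type) [Group G] (Γ : CGraph)
    (A : GraphAction G Γ) (hfine : Γ.Fine)
    (hcc : ∃ s : Set Γ.E, s.Finite ∧ ∀ e : Γ.E, ∃ g : G, A.eMap g e ∈ s) :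
    ∀ n : ℕ, ∃ s : Set (List (Γ.E × Bool)), s.Finite ∧
      ∀ l : List (Γ.E × Bool), Γ.IsCircuit l → l.length ≤ n →
        ∃ g : G, (l.map fun p => (A.eMap g p.1, p.2)) ∈ s := by
  obtain ⟨s0, hs0fin, hrep⟩ := hcc
  intro n
  refine ⟨{l | Γ.IsCircuit l ∧ l.length ≤ n ∧ ∃ e ∈ s0, e ∈ l.map Prod.fst}, ?_, ?_⟩
  · apply Set.Finite.subset (Set.Finite.biUnion hs0fin (fun e _ => hfine e n))
    rintro l ⟨hc, hlen, e, hes, hel⟩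
    exact Set.mem_biUnion hes ⟨hc, hel, hlen⟩
  · intro l hcirc hlen
    have hne : l ≠ [] := hcirc.1.1
    have hpos : 0 < l.length := List.length_pos_iff.mpr hne
    set e0 : Γ.E := (l.get ⟨0, hpos⟩).1 with he0
    obtain ⟨g, hg⟩ := hrep e0
    refine ⟨g, ?_, ?_, A.eMap g e0, hg, ?_⟩
    · obtain ⟨⟨_, hcl⟩, hnde, hndv⟩ := hcirc
      refine ⟨⟨by simpa using hne, ?_⟩, ?_, ?_⟩
      · intro i
        have hl : (l.map fun p => (A.eMap g p.1, p.2)).length = l.length :=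
          List.length_map _
        have hi : (i : ℕ) < l.length := hl ▸ i.isLt
        have hi1 : ((i : ℕ) + 1) % (l.map fun p => (A.eMap g p.1, p.2)).length
            = ((i : ℕ) + 1) % l.length := congrArg (HMod.hMod ((i : ℕ) + 1)) hl
        have := hcl ⟨(i : ℕ), hi⟩
        simp only [List.get_eq_getElem, List.getElem_map] at *
        rw [A.tgt_map, A.src_map, this]
        congr 1
        simp [hl]
      · have : ((l.map fun p => (A.eMap g p.1, p.2)).map Prod.fst)
            = (l.map Prod.fst).map (A.eMap g) := by
          simp [List.map_map, Function.comp]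
        rw [this]
        exact hnde.map (A.eMap g).injective
      · have : ((l.map fun p => (A.eMap g p.1, p.2)).map Γ.src)
            = (l.map Γ.src).map (A.vMap g) := by
          simp only [List.map_map]
          exact List.map_congr_left fun p _ => A.src_map g p
        rw [this]
        exact hndv.map (A.vMap g).injective
    · simpa using hlen
    · simp only [List.map_map]
      have : e0 ∈ l.map Prod.fst := by
        rw [he0]
        exact List.mem_map_of_mem (l.get_mem ⟨0, hpos⟩)
      simpa [List.map_map, Function.comp, he0] using List.mem_map_of_mem (f := fun p => A.eMap g p.1) (l.get_mem ⟨0, hpos⟩)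
end
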